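/- For a pure tripartite state ψ on H_A ⊗ H_B ⊗ H_C and any purification of ρ_AB to C = C_L ⊗ C_R, the quantity 2S(AC_L) − I(A:B) decomposes as I(C_L : BC_R | A) + I(C_R : A | B), where I(X:Y|Z) is the quantum conditional mutual information; in particular 2S(AC_L) ≥ I(A:B). -/

import Mathlib

open scoped Classical ComplexOrder

/-- von Neumann entropy of a (Hermitian) matrix, via its spectrum. -/
noncomputable def vnEntropy {n : Type*} [Fintype n] [DecidableEq n]
    (ρ : Matrix n n ℂ) : ℝ :=
  if h : ρ.IsHermitian then -∑ i, h.eigenvalues i * Real.log (h.eigenvalues i) else 0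

/-- Reduced density matrix of a bipartite pure state `ψ : α × β → ℂ` on `α`
(partial trace of `|ψ⟩⟨ψ|` over `β`). -/
noncomputable def redDM {α β : Type*} [Fintype β] (ψ : α × β → ℂ) : Matrix α α ℂ :=
  Matrix.of fun a a' => ∑ b, ψ (a, b) * (starRingEnd ℂ) (ψ (a', b))

/-- Entanglement entropy of the subsystem `α` for the bipartite pure state `ψ`. -/
noncomputable def SE {α β : Type*} [Fintype α] [DecidableEq α] [Fintype β]
    (ψ : α × β → ℂ) : ℝ := vnEntropy (redDM ψ)

section
variable {nA nB nL nR : ℕ} (ψ : Fin nA × Fin nB × Fin nL × Fin nR → ℂ)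

/-- `S(A)` for a pure state on `A ⊗ B ⊗ C_L ⊗ C_R`. -/
noncomputable def S_A : ℝ := SE ψ
/-- `S(B)`. -/
noncomputable def S_B : ℝ :=
  SE (fun p : Fin nB × (Fin nA × Fin nL × Fin nR) => ψ (p.2.1, p.1, p.2.2))
/-- `S(AB)`. -/
noncomputable def S_AB : ℝ :=
  SE (fun p : (Fin nA × Fin nB) × (Fin nL × Fin nR) => ψ (p.1.1, p.1.2, p.2.1, p.2.2))
/-- `S(A C_L)`. -/
noncomputable def S_ACL : ℝ :=
  SE (fun p : (Fin nA × Fin nL) × (Fin nB × Fin nR) => ψ (p.1.1, p.2.1, p.1.2, p.2.2))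
/-- `S(A B C_R)`. -/
noncomputable def S_ABCR : ℝ :=
  SE (fun p : (Fin nA × Fin nB × Fin nR) × Fin nL => ψ (p.1.1, p.1.2.1, p.2, p.1.2.2))
/-- `S(B C_R)`. -/
noncomputable def S_BCR : ℝ :=
  SE (fun p : (Fin nB × Fin nR) × (Fin nA × Fin nL) => ψ (p.2.1, p.1.1, p.2.2, p.1.2))
/-- `S(A B C_L C_R)` (entropy of the full, pure, state). -/
noncomputable def S_full : ℝ :=
  SE (fun p : (Fin nA × Fin nB × Fin nL × Fin nR) × Unit => ψ p.1)

/-- The conditional mutual information `I(C_L : B C_R | A)`. -/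
noncomputable def CMI₁ : ℝ := S_ACL ψ + S_ABCR ψ - S_full ψ - S_A ψ
/-- The conditional mutual information `I(C_R : A | B)`. -/
noncomputable def CMI₂ : ℝ := S_BCR ψ + S_AB ψ - S_ABCR ψ - S_B ψ

end


section AuxProofs

open Polynomial Matrix

private lemma myEvalCharpoly {n : Type*} [Fintype n] [DecidableEq n] (A : Matrix n n ℂ) (x : ℂ) :
    A.charpoly.eval x = (x • (1 : Matrix n n ℂ) - A).det := by
  rw [Matrix.charpoly, ← Polynomial.coe_evalRingHom, RingHom.map_det]
  congr 1
  ext i j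
  by_cases h : i = j
  · subst h
    simp [Matrix.charmatrix_apply_eq, Matrix.one_apply]
  · simp [Matrix.charmatrix_apply_ne _ _ _ h, Matrix.one_apply, h]

private lemma myCharpolyHerm {n : Type*} [Fintype n] [DecidableEq n] {A : Matrix n n ℂ}
    (hA : A.IsHermitian) :
    A.charpoly = ((Finset.univ.val.map fun i => ((hA.eigenvalues i : ℝ) : ℂ)).map
      fun c => Polynomial.X - Polynomial.C c).prod := by
  apply Polynomial.funext
  intro x
  rw [myEvalCharpoly]
  set U : Matrix n n ℂ := (hA.eigenvectorUnitary : Matrix n n ℂ) with hU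
  set D : Matrix n n ℂ := Matrix.diagonal (RCLike.ofReal ∘ hA.eigenvalues) with hD
  have hUU : U * star U = 1 := (Matrix.mem_unitaryGroup_iff).mp hA.eigenvectorUnitary.2
  have hUU' : star U * U = 1 := (Matrix.mem_unitaryGroup_iff').mp hA.eigenvectorUnitary.2
  have key : x • (1 : Matrix n n ℂ) - A = U * (x • (1 : Matrix n n ℂ) - D) * star U := by
    rw [Matrix.mul_sub, Matrix.sub_mul, Matrix.mul_smul, Matrix.smul_mul, Matrix.mul_one, hUU,
      ← (hA.spectral_theorem.trans rfl : A = U * D * star U)]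
  have hdiag : x • (1 : Matrix n n ℂ) - D
      = Matrix.diagonal (fun i => x - ((hA.eigenvalues i : ℝ) : ℂ)) := by
    rw [hD]
    ext i j
    by_cases h : i = j
    · subst h; simp [Matrix.one_apply, Matrix.diagonal]
    · simp [Matrix.one_apply, Matrix.diagonal, h]
  rw [key, Matrix.det_mul, Matrix.det_mul, mul_comm, ← mul_assoc, ← Matrix.det_mul, hUU',
    Matrix.det_one, one_mul, hdiag, Matrix.det_diagonal, Multiset.map_map,
    Polynomial.eval_multiset_prod, Multiset.map_map]
  rw [Finset.prod_eq_multiset_prod]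
  congr 1
  apply Multiset.map_congr rfl
  intro i _
  simp

private lemma myDetSmulOne {k : Type*} [Fintype k] [DecidableEq k] (N : Matrix k k ℂ) {x : ℂ}
    (hx : x ≠ 0) :
    (x • (1 : Matrix k k ℂ) - N).det = x ^ Fintype.card k * (1 - x⁻¹ • N).det := by
  have : x • (1 : Matrix k k ℂ) - N = x • ((1 : Matrix k k ℂ) - x⁻¹ • N) := by
    rw [smul_sub, smul_smul, mul_inv_cancel₀ hx, one_smul]
  rw [this, Matrix.det_smul]

private lemma myCharpolyMulComm {m n : Type*} [Fintype m] [Fintype n] [DecidableEq m]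
    [DecidableEq n] (A : Matrix m n ℂ) (B : Matrix n m ℂ) :
    Polynomial.X ^ (Fintype.card n) * (A * B).charpoly
      = Polynomial.X ^ (Fintype.card m) * (B * A).charpoly := by
  apply Polynomial.eq_of_infinite_eval_eq
  apply Set.Infinite.mono (s := {(0 : ℂ)}ᶜ)
  · intro x hx
    have hx : x ≠ 0 := hx
    simp only [Set.mem_setOf_eq, Polynomial.eval_mul, Polynomial.eval_pow, Polynomial.eval_X,
      myEvalCharpoly]
    rw [myDetSmulOne _ hx, myDetSmulOne _ hx]
    have h1 : (1 : Matrix m m ℂ) - x⁻¹ • (A * B) = 1 + (-(x⁻¹ • A)) * B := by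
      rw [Matrix.neg_mul, Matrix.smul_mul, sub_eq_add_neg]
    have h2 : (1 : Matrix n n ℂ) - x⁻¹ • (B * A) = 1 + B * (-(x⁻¹ • A)) := by
      rw [Matrix.mul_neg, Matrix.mul_smul, sub_eq_add_neg]
    rw [h1, h2, Matrix.det_one_add_mul_comm]
    ring
  · exact (Set.finite_singleton 0).infinite_compl

private noncomputable def gfun (z : ℂ) : ℝ := z.re * Real.log z.re

private lemma gfun_zero : gfun 0 = 0 := by simp [gfun]

private lemma myRootsHerm {n : Type*} [Fintype n] [DecidableEq n] {A : Matrix n n ℂ}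
    (hA : A.IsHermitian) :
    A.charpoly.roots = Finset.univ.val.map fun i => ((hA.eigenvalues i : ℝ) : ℂ) := by
  rw [myCharpolyHerm hA, Polynomial.roots_multiset_prod_X_sub_C]

private lemma myEntropyEq {n : Type*} [Fintype n] [DecidableEq n] {A : Matrix n n ℂ}
    (hA : A.IsHermitian) :
    vnEntropy A = -((A.charpoly.roots).map gfun).sum := by
  rw [vnEntropy, dif_pos hA, myRootsHerm hA, Multiset.map_map]
  congr 1

private lemma myCharpolyTranspose {n : Type*} [Fintype n] [DecidableEq n] (A : Matrix n n ℂ) :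
    (Aᵀ).charpoly = A.charpoly := by
  apply Polynomial.funext
  intro x
  rw [myEvalCharpoly, myEvalCharpoly, ← Matrix.det_transpose (x • (1 : Matrix n n ℂ) - A)]
  congr 1
  simp [Matrix.transpose_sub, Matrix.transpose_smul]

private lemma myGSumEq {m n : Type*} [Fintype m] [Fintype n] [DecidableEq m] [DecidableEq n]
    (A : Matrix m n ℂ) (B : Matrix n m ℂ) :
    (((A * B).charpoly.roots).map gfun).sum = (((B * A).charpoly.roots).map gfun).sum := by
  have h := congrArg Polynomial.roots (myCharpolyMulComm A B)
  have hne1 : (Polynomial.X : Polynomial ℂ) ^ (Fintype.card n) ≠ 0 :=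
    pow_ne_zero _ Polynomial.X_ne_zero
  have hne2 : (Polynomial.X : Polynomial ℂ) ^ (Fintype.card m) ≠ 0 :=
    pow_ne_zero _ Polynomial.X_ne_zero
  rw [Polynomial.roots_mul (mul_ne_zero hne1 (A * B).charpoly_monic.ne_zero),
    Polynomial.roots_mul (mul_ne_zero hne2 (B * A).charpoly_monic.ne_zero),
    Polynomial.roots_pow, Polynomial.roots_pow, Polynomial.roots_X] at h
  have h2 := congrArg (fun s : Multiset ℂ => ((s.map gfun).sum)) h
  simp only [Multiset.map_add, Multiset.sum_add, Multiset.nsmul_singleton,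
    Multiset.map_replicate, gfun_zero, Multiset.sum_replicate, smul_zero] at h2
  linarith

private lemma mySEsymm {α β : Type*} [Fintype α] [DecidableEq α] [Fintype β] [DecidableEq β]
    (ψ : α × β → ℂ) :
    SE ψ = SE (fun p : β × α => ψ (p.2, p.1)) := by
  set M : Matrix α β ℂ := Matrix.of fun a b => ψ (a, b) with hM
  have h1 : redDM ψ = M * Mᴴ := by
    ext a a'
    simp [redDM, Matrix.mul_apply, Matrix.conjTranspose_apply, hM]
  have h2 : redDM (fun p : β × α => ψ (p.2, p.1)) = (Mᴴ * M)ᵀ := by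
    ext b b'
    simp only [redDM, Matrix.of_apply, Matrix.transpose_apply, Matrix.mul_apply,
      Matrix.conjTranspose_apply, hM]
    exact Finset.sum_congr rfl fun a _ => by rw [mul_comm]; rfl
  rw [SE, SE, h1, h2,
    myEntropyEq (Matrix.isHermitian_mul_conjTranspose_self M),
    myEntropyEq ((show (Mᴴ * M).IsHermitian by
      simpa using Matrix.isHermitian_mul_conjTranspose_self Mᴴ).transpose),
    myCharpolyTranspose, myGSumEq]

private lemma myVnEntropyOne : vnEntropy (1 : Matrix Unit Unit ℂ) = 0 := by
  have hA : (1 : Matrix Unit Unit ℂ).IsHermitian := Matrix.isHermitian_one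
  have hdet := hA.det_eq_prod_eigenvalues
  rw [Matrix.det_one, Fintype.prod_unique] at hdet
  have h1 : hA.eigenvalues default = 1 := by
    exact Complex.ofReal_inj.mp hdet.symm
  rw [vnEntropy, dif_pos hA, Fintype.sum_unique, h1]
  simp

private lemma myFullEntropy {γ : Type*} [Fintype γ] [DecidableEq γ] (ψ0 : γ → ℂ)
    (h : ∑ x, Complex.normSq (ψ0 x) = 1) :
    SE (fun p : γ × Unit => ψ0 p.1) = 0 := by
  rw [mySEsymm]
  have hred : redDM (fun q : Unit × γ => ψ0 q.2) = (1 : Matrix Unit Unit ℂ) := by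
    ext u u'
    have key : ∑ b, ψ0 b * (starRingEnd ℂ) (ψ0 b) = 1 := by
      have h' : ∀ b, ψ0 b * (starRingEnd ℂ) (ψ0 b) = (Complex.normSq (ψ0 b) : ℂ) := by
        intro b; rw [Complex.mul_conj]
      rw [Finset.sum_congr rfl fun b _ => h' b, ← Complex.ofReal_sum, h, Complex.ofReal_one]
    simpa [redDM, Matrix.one_apply] using key
  rw [SE, hred, myVnEntropyOne]

end AuxProofs

/-- For a pure state `ψ` on `A ⊗ B ⊗ C_L ⊗ C_R` (a purification of
`ρ_AB`), `2 S(A C_L) − I(A:B) = I(C_L : B C_R | A) + I(C_R : A | B)`; in particular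
(using strong subadditivity, i.e. nonnegativity of conditional mutual information,
which may be assumed) `2 S(A C_L) ≥ I(A:B)`. -/
theorem two_SACL_sub_I_eq_sum_CMI (nA nB nL nR : ℕ)
    (ψ : Fin nA × Fin nB × Fin nL × Fin nR → ℂ)
    (hnorm : ∑ x : Fin nA × Fin nB × Fin nL × Fin nR, Complex.normSq (ψ x) = 1)
    (hSSA₁ : 0 ≤ CMI₁ ψ) (hSSA₂ : 0 ≤ CMI₂ ψ) :
    2 * S_ACL ψ - (S_A ψ + S_B ψ - S_AB ψ) = CMI₁ ψ + CMI₂ ψ ∧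
      S_A ψ + S_B ψ - S_AB ψ ≤ 2 * S_ACL ψ := by
  have hACL : S_ACL ψ = S_BCR ψ := by
    simp only [S_ACL, S_BCR]
    exact mySEsymm _
  have hfull : S_full ψ = 0 := by
    simp only [S_full]
    exact myFullEntropy ψ hnorm
  have key : 2 * S_ACL ψ - (S_A ψ + S_B ψ - S_AB ψ) = CMI₁ ψ + CMI₂ ψ := by
    simp only [CMI₁, CMI₂]
    linarith
  exact ⟨key, by linarith⟩
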